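/- Let B be a category with an initial object and all ω-colimits, and let T : A × B → B be an ω-cocontinuous functor. Then T has a parameterised initial algebra (T†, τ): a functor T† : A → B together with a natural isomorphism τ : T ∘ ⟨Id, T†⟩ ⇒ T† such that for every object A of A, (T†A, τ_A) is an initial algebra for the endofunctor T(A, −). Moreover T† is ω-cocontinuous. -/

import Mathlib

open CategoryTheory Limits

namespace ParamInitAlgAux

section Chain

variable {C : Type*} [Category C]

/-- Objects of the initial chain of `F` starting at `X0`. -/
def chainObj (F : C ⥤ C) (X0 : C) : ℕ → C
  | 0 => X0
  | n + 1 => F.obj (chainObj F X0 n)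

variable (F : C ⥤ C) {X0 : C} (hX0 : IsInitial X0)

/-- The connecting maps of the initial chain. -/
def chainStep : ∀ n : ℕ, chainObj F X0 n ⟶ chainObj F X0 (n + 1)
  | 0 => hX0.to _
  | n + 1 => F.map (chainStep n)

/-- The initial chain of `F` as a functor `ℕ ⥤ C`. -/
def chain : ℕ ⥤ C := Functor.ofSequence (chainStep F hX0)

@[simp] lemma chain_obj (n : ℕ) : (chain F hX0).obj n = chainObj F X0 n := rfl

@[simp] lemma chain_map_succ (n : ℕ) :
    (chain F hX0).map (homOfLE (n.le_add_right 1)) = chainStep F hX0 n :=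
  Functor.ofSequence_map_homOfLE_succ _ n

/-- The canonical maps from the chain into any `F`-algebra. -/
def toAlg (x : Endofunctor.Algebra F) : ∀ n : ℕ, chainObj F X0 n ⟶ x.a
  | 0 => hX0.to _
  | n + 1 => F.map (toAlg x n) ≫ x.str

lemma toAlg_w (x : Endofunctor.Algebra F) (n : ℕ) :
    chainStep F hX0 n ≫ toAlg F hX0 x (n + 1) = toAlg F hX0 x n := by
  induction n with
  | zero => exact hX0.hom_ext _ _
  | succ n ih =>
    show F.map (chainStep F hX0 n) ≫ F.map (toAlg F hX0 x (n + 1)) ≫ x.str =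
      F.map (toAlg F hX0 x n) ≫ x.str
    rw [← Category.assoc, ← F.map_comp, ih]

/-- The cocone over the chain with apex an `F`-algebra. -/
def toAlgCocone (x : Endofunctor.Algebra F) : Cocone (chain F hX0) where
  pt := x.a
  ι := NatTrans.ofSequence (fun n => toAlg F hX0 x n) (fun n => by
    simpa using toAlg_w F hX0 x n)

/-- The cocone over `chain ⋙ F` given by shifting the legs of a cocone over the chain. -/
def shiftCocone (c : Cocone (chain F hX0)) : Cocone (chain F hX0 ⋙ F) where
  pt := c.pt
  ι := NatTrans.ofSequence (fun n => c.ι.app (n + 1)) (fun n => by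
    have h : (chain F hX0 ⋙ F).map (homOfLE (n.le_add_right 1)) =
        (chain F hX0).map (homOfLE ((n + 1).le_add_right 1)) := by
      rw [Functor.comp_map, chain_map_succ, chain_map_succ]; rfl
    rw [h]
    exact (c.w (homOfLE ((n + 1).le_add_right 1))).trans (Category.comp_id _).symm)

variable [PreservesColimitsOfShape ℕ F]

/-- The structure map on the colimit of the chain. -/
noncomputable def structMap {c : Cocone (chain F hX0)} (hc : IsColimit c) :
    F.obj c.pt ⟶ c.pt :=
  (isColimitOfPreserves F hc).desc (shiftCocone F hX0 c)

lemma structMap_fac {c : Cocone (chain F hX0)} (hc : IsColimit c) (n : ℕ) :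
    F.map (c.ι.app n) ≫ structMap F hX0 hc = c.ι.app (n + 1) := by
  exact (isColimitOfPreserves F hc).fac (shiftCocone F hX0 c) n

/-- Adámek's theorem: the colimit of the initial chain carries an initial algebra
structure, provided the structure map satisfies the defining recurrences. -/
theorem isInitial_algebra {c : Cocone (chain F hX0)} (hc : IsColimit c)
    (s : F.obj c.pt ⟶ c.pt) (hs : ∀ n, F.map (c.ι.app n) ≫ s = c.ι.app (n + 1)) :
    Nonempty (IsInitial (⟨c.pt, s⟩ : Endofunctor.Algebra F)) := by
  have hFc : IsColimit (F.mapCocone c) := isColimitOfPreserves F hc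
  have fac : ∀ (x : Endofunctor.Algebra F) (n : ℕ),
      c.ι.app n ≫ hc.desc (toAlgCocone F hX0 x) = toAlg F hX0 x n := by
    intro x n
    exact hc.fac (toAlgCocone F hX0 x) n
  refine ⟨IsInitial.ofUniqueHom (fun x => ⟨hc.desc (toAlgCocone F hX0 x), ?_⟩)
    (fun x m => ?_)⟩
  · -- compatibility: F.map f ≫ x.str = s ≫ f
    apply hFc.hom_ext
    intro n
    have h1 : F.map (c.ι.app n) ≫ F.map (hc.desc (toAlgCocone F hX0 x)) ≫ x.str =
        toAlg F hX0 x (n + 1) := by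
      exact (F.map_comp_assoc _ _ _).symm.trans (congrArg (fun t => F.map t ≫ x.str) (fac x n))
    have h2 : F.map (c.ι.app n) ≫ s ≫ hc.desc (toAlgCocone F hX0 x) =
        toAlg F hX0 x (n + 1) := by
      rw [← Category.assoc, hs n]; exact fac x (n + 1)
    exact h1.trans h2.symm
  · -- uniqueness
    ext
    apply hc.hom_ext
    intro n
    refine Eq.trans ?_ (fac x n).symm
    induction n with
    | zero => exact hX0.hom_ext _ _
    | succ n ih =>
      have : c.ι.app (n + 1) ≫ m.f = F.map (c.ι.app n) ≫ s ≫ m.f := by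
        rw [← Category.assoc, hs n]; rfl
      rw [this, ← m.h, ← Category.assoc, ← F.map_comp, ih]
      rfl

end Chain

section Aux

/-- A constant functor preserves colimits of shape `ℕ`. -/
lemma constPreservesNat {C : Type*} [Category C] {D : Type*} [Category D] (x : D) :
    PreservesColimitsOfShape ℕ ((Functor.const C).obj x : C ⥤ D) := by
  constructor
  intro G
  constructor
  intro c hc
  refine ⟨⟨fun s => s.ι.app 0, fun s j => ?_, fun s m hm => ?_⟩⟩
  · simpa using (s.w (homOfLE (Nat.zero_le j))).symm
  · simpa using hm 0

/-- A cocone in a product category whose images under the two projections are colimits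
is itself a colimit. -/
def prodIsColimit {J : Type*} [Category J] {A B : Type*} [Category A] [Category B]
    {E : J ⥤ A × B} (c : Cocone E)
    (h1 : IsColimit ((CategoryTheory.Prod.fst A B).mapCocone c))
    (h2 : IsColimit ((CategoryTheory.Prod.snd A B).mapCocone c)) : IsColimit c where
  desc s := (h1.desc ((CategoryTheory.Prod.fst A B).mapCocone s),
    h2.desc ((CategoryTheory.Prod.snd A B).mapCocone s))
  fac s j := Prod.ext (by simpa using h1.fac ((CategoryTheory.Prod.fst A B).mapCocone s) j)
    (by simpa using h2.fac ((CategoryTheory.Prod.snd A B).mapCocone s) j)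
  uniq s m hm := Prod.ext
    (h1.uniq ((CategoryTheory.Prod.fst A B).mapCocone s) m.1
      (fun j => congrArg Prod.fst (hm j)))
    (h2.uniq ((CategoryTheory.Prod.snd A B).mapCocone s) m.2
      (fun j => congrArg Prod.snd (hm j)))

/-- `prod'` of two functors preserving colimits of a shape preserves them. -/
lemma prod'Preserves {C A B : Type*} [Category C] [Category A] [Category B]
    {J : Type*} [Category J] (L : C ⥤ A) (R : C ⥤ B)
    [PreservesColimitsOfShape J L] [PreservesColimitsOfShape J R] :
    PreservesColimitsOfShape J (L.prod' R) := by
  constructor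
  intro G
  constructor
  intro c hc
  exact ⟨prodIsColimit _ (isColimitOfPreserves L hc) (isColimitOfPreserves R hc)⟩

end Aux

section Param

variable {A : Type u₁} [Category.{v₁} A] {B : Type u₂} [Category.{v₂} B]
  [HasInitial B] [HasColimitsOfShape ℕ B]
  (T : A × B ⥤ B) [PreservesColimitsOfShape ℕ T]

/-- The endofunctor `F ↦ T ∘ ⟨Id, F⟩` on the functor category `A ⥤ B`. -/
def bigT : (A ⥤ B) ⥤ A ⥤ B where
  obj F := Functor.prod' (𝟭 A) F ⋙ T
  map {F G} η := Functor.whiskerRight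
    { app := fun a => (𝟙 a, η.app a)
      naturality := fun a b f => Prod.ext (by simp) (η.naturality f) } T
  map_id F := by
    ext a
    exact T.map_id (a, F.obj a)
  map_comp {F G H} η θ := by
    ext a
    dsimp
    rw [← T.map_comp]
    congr 1
    exact Prod.ext (by simp) (by simp)

/-- The endofunctor `T(a, −)` on `B`. -/
abbrev Ta (a : A) : B ⥤ B := Functor.prod' ((Functor.const B).obj a) (𝟭 B) ⋙ T

lemma taPreserves (a : A) : PreservesColimitsOfShape ℕ (Ta T a) := by
  haveI := constPreservesNat (C := B) a
  haveI := prod'Preserves ((Functor.const B).obj a) (𝟭 B) (J := ℕ)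
  infer_instance

lemma bigT_preserves : PreservesColimitsOfShape ℕ (bigT T) := by
  apply preservesColimitsOfShape_of_evaluation
  intro a
  haveI := taPreserves T a
  have e : (evaluation A B).obj a ⋙ Ta T a ≅ bigT T ⋙ (evaluation A B).obj a :=
    NatIso.ofComponents (fun F => Iso.refl _) (fun {F G} η => by
      dsimp
      exact (Category.comp_id _).trans (Category.id_comp _).symm)
  exact preservesColimitsOfShape_of_natIso e

/-- The constant functor at the initial object is initial in the functor category. -/
noncomputable def X0FInitial : IsInitial ((Functor.const A).obj (⊥_ B) : A ⥤ B) :=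
  IsInitial.ofUniqueHom
    (fun G =>
      { app := fun a => initial.to _
        naturality := fun a b f => initialIsInitial.hom_ext _ _ })
    (fun G m => by
      ext a
      exact initialIsInitial.hom_ext _ _)

lemma chainObjPreserves :
    ∀ n : ℕ, PreservesColimitsOfShape ℕ
      (chainObj (bigT T) ((Functor.const A).obj (⊥_ B)) n)
  | 0 => constPreservesNat _
  | n + 1 => by
    haveI := chainObjPreserves n
    haveI := prod'Preserves (𝟭 A)
      (chainObj (bigT T) ((Functor.const A).obj (⊥_ B)) n) (J := ℕ)
    show PreservesColimitsOfShape ℕ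
      (Functor.prod' (𝟭 A) (chainObj (bigT T) ((Functor.const A).obj (⊥_ B)) n) ⋙ T)
    infer_instance

/-- The pointwise comparison isomorphisms between the chain of `T(a,−)` and the
evaluation of the chain of `bigT T`. -/
noncomputable def isoPt (a : A) :
    ∀ n : ℕ, chainObj (Ta T a) (⊥_ B) n ≅
      (chainObj (bigT T) ((Functor.const A).obj (⊥_ B)) n).obj a
  | 0 => Iso.refl _
  | n + 1 => (Ta T a).mapIso (isoPt a n)

lemma isoPt_step (a : A) (n : ℕ) :
    chainStep (Ta T a) initialIsInitial n ≫ (isoPt T a (n + 1)).hom =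
      (isoPt T a n).hom ≫ (chainStep (bigT T) (X0FInitial (A := A)) n).app a := by
  induction n with
  | zero => exact initialIsInitial.hom_ext _ _
  | succ n ih =>
    show (Ta T a).map (chainStep (Ta T a) initialIsInitial n) ≫
        (Ta T a).map (isoPt T a (n + 1)).hom =
      (Ta T a).map (isoPt T a n).hom ≫
        (Ta T a).map ((chainStep (bigT T) (X0FInitial (A := A)) n).app a)
    rw [← Functor.map_comp, ← Functor.map_comp, ih]

/-- The comparison natural transformation between the chain of `T(a,−)` and the
evaluation at `a` of the chain of `bigT T`. -/
noncomputable def ptNat (a : A) :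
    chain (Ta T a) initialIsInitial ⟶
      chain (bigT T) (X0FInitial (A := A)) ⋙ (evaluation A B).obj a :=
  NatTrans.ofSequence (fun n => (isoPt T a n).hom) (fun n => by
    simpa using isoPt_step T a n)

@[simp] lemma ptNat_app (a : A) (n : ℕ) : (ptNat T a).app n = (isoPt T a n).hom := rfl

end Param

end ParamInitAlgAux

open ParamInitAlgAux

/-- Let `B` be a category with an initial object and all ω-colimits and let
`T : A × B ⥤ B` be ω-cocontinuous. Then `T` has a parameterised initial algebra
`(T†, τ)`: a functor `T† : A ⥤ B` with a natural isomorphism `τ : T ∘ ⟨Id, T†⟩ ≅ T†`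
such that for every `a : A`, `(T† a, τ_a)` is an initial algebra for the endofunctor
`T(a, −)`. Moreover `T†` is ω-cocontinuous. -/
theorem parameterised_initial_algebra_exists
    {A : Type u₁} [Category.{v₁} A] {B : Type u₂} [Category.{v₂} B]
    [HasInitial B] [HasColimitsOfShape ℕ B]
    (T : A × B ⥤ B) [PreservesColimitsOfShape ℕ T] :
    ∃ (Tdag : A ⥤ B) (τ : Functor.prod' (𝟭 A) Tdag ⋙ T ≅ Tdag),
      (∀ a : A, Nonempty (IsInitial
        (⟨Tdag.obj a, τ.hom.app a⟩ :
          Endofunctor.Algebra (Functor.prod' ((Functor.const B).obj a) (𝟭 B) ⋙ T)))) ∧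
      Nonempty (PreservesColimitsOfShape ℕ Tdag) := by
  haveI := bigT_preserves T
  set ch := chain (bigT T) (X0FInitial (A := A) (B := B)) with hch
  let c : Cocone ch := colimit.cocone ch
  let hc : IsColimit c := colimit.isColimit ch
  let s : (bigT T).obj c.pt ⟶ c.pt := structMap (bigT T) (X0FInitial (A := A)) hc
  have hs : ∀ n, (bigT T).map (c.ι.app n) ≫ s = c.ι.app (n + 1) :=
    structMap_fac (bigT T) (X0FInitial (A := A)) hc
  -- pointwise initiality
  have point : ∀ a : A, Nonempty (IsInitial
      (⟨c.pt.obj a, s.app a⟩ : Endofunctor.Algebra (Ta T a))) := by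
    intro a
    haveI := taPreserves T a
    have hev : IsColimit (((evaluation A B).obj a).mapCocone c) :=
      isColimitOfPreserves _ hc
    haveI : ∀ n : ℕ, IsIso ((ptNat T a).app n) := fun n => by
      rw [ptNat_app]; exact Iso.isIso_hom _
    haveI : IsIso (ptNat T a) := NatIso.isIso_of_isIso_app _
    let e : chain (Ta T a) initialIsInitial ≅ ch ⋙ (evaluation A B).obj a :=
      asIso (ptNat T a)
    have hca : IsColimit ((Cocone.precompose (ptNat T a)).obj
        (((evaluation A B).obj a).mapCocone c)) :=
      (IsColimit.precomposeHomEquiv e _).symm hev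
    have hsa : ∀ n : ℕ, (Ta T a).map (((Cocone.precompose (ptNat T a)).obj
        (((evaluation A B).obj a).mapCocone c)).ι.app n) ≫ s.app a =
        ((Cocone.precompose (ptNat T a)).obj
          (((evaluation A B).obj a).mapCocone c)).ι.app (n + 1) := by
      intro n
      have h' : (Ta T a).map ((c.ι.app n).app a) ≫ s.app a =
          (c.ι.app (n + 1)).app a := congrArg (fun t => t.app a) (hs n)
      show (Ta T a).map ((isoPt T a n).hom ≫ (c.ι.app n).app a) ≫ s.app a = _
      exact ((Ta T a).map_comp_assoc _ _ _).trans (congrArg (fun t => (Ta T a).map (isoPt T a n).hom ≫ t) h')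
    exact isInitial_algebra (Ta T a) initialIsInitial hca (s.app a) hsa
  -- the structure map is an isomorphism pointwise by Lambek's lemma
  haveI : ∀ a : A, IsIso (s.app a) := fun a => by
    have h := (point a).some
    exact CategoryTheory.Endofunctor.Algebra.Initial.str_isIso h
  haveI : IsIso s := NatIso.isIso_of_isIso_app s
  refine ⟨c.pt, (asIso s : (bigT T).obj c.pt ≅ c.pt), fun a => point a, ?_⟩
  -- preservation of ω-colimits
  haveI : ∀ n : ℕ, PreservesColimitsOfShape ℕ (ch.obj n) := chainObjPreserves T
  haveI : PreservesColimitsOfShape ℕ ch.flip :=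
    preservesColimitsOfShape_of_evaluation _ _ (fun n =>
      preservesColimitsOfShape_of_natIso (flipCompEvaluation ch n).symm)
  exact ⟨preservesColimitsOfShape_of_natIso (colimitIsoFlipCompColim ch).symm⟩
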